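/- Let B(c) = (1−c)(x(x−1)∂ + bx − c + 1) and f₂(c) = x^{1−c}·₂F₁(1, 1+b−c, 2−c; x) for generic b,c. Then B(c+1) • f₂(c+1) = c²·(b−c)/(1−c)·f₂(c). -/

import Mathlib

open Complex

/-- The Pochhammer symbol `(q)ₙ`. -/
noncomputable def poch (q : ℂ) (n : ℕ) : ℂ := (ascPochhammer ℂ n).eval q

/-- The second solution `f₂(c) = x^{1−c}·₂F₁(1, 1+b−c, 2−c; x)` of the Gauss
hypergeometric equation with parameters `(a,b,c) = (c,b,c)`, as a function of
`x ∈ (0,1)` (with values in `ℂ`). -/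
noncomputable def f2 (b c : ℂ) : ℝ → ℂ := fun x =>
  (x : ℂ) ^ (1 - c) *
    ∑' n : ℕ, poch 1 n * poch (1 + b - c) n / (poch (2 - c) n * n.factorial) * (x : ℂ) ^ n

open Filter Topology

lemma poch_zero (q : ℂ) : poch q 0 = 1 := by simp [poch]

lemma poch_succ (q : ℂ) (n : ℕ) : poch q (n+1) = poch q n * (q + n) :=
  ascPochhammer_succ_eval n q

lemma poch_succ_left (q : ℂ) (n : ℕ) : poch q (n+1) = q * poch (q+1) n := by
  unfold poch
  rw [ascPochhammer_succ_left]
  simp [Polynomial.eval_comp]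

lemma poch_ne_zero (q : ℂ) (h : ∀ k : ℕ, q + k ≠ 0) : ∀ n, poch q n ≠ 0 := by
  intro n
  induction n with
  | zero => simp [poch_zero]
  | succ m ih => rw [poch_succ]; exact mul_ne_zero ih (h m)

lemma aux_tendsto_ratio (p q : ℂ) (hq : ∀ k : ℕ, q + (k:ℂ) ≠ 0) :
    Tendsto (fun n : ℕ => ‖p + n‖ / ‖q + n‖) atTop (𝓝 1) := by
  have hw : Tendsto (fun n : ℕ => (p - q) / (q + n)) atTop (𝓝 0) := by
    refine squeeze_zero_norm' (a := fun n : ℕ => ‖p - q‖ * ((n : ℝ) - ‖q‖)⁻¹) ?_ ?_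
    · filter_upwards [eventually_gt_atTop ⌈‖q‖⌉₊] with n hn
      have hn' : ‖q‖ < (n : ℝ) := lt_of_le_of_lt (Nat.le_ceil _) (by exact_mod_cast hn)
      have h1 : (n : ℝ) - ‖q‖ ≤ ‖q + (n : ℂ)‖ := by
        calc (n : ℝ) - ‖q‖ = ‖((n:ℕ) : ℂ)‖ - ‖-q‖ := by simp
        _ ≤ ‖(n : ℂ) - (-q)‖ := norm_sub_norm_le _ _
        _ = ‖q + (n : ℂ)‖ := by ring_nf
      rw [norm_div, div_eq_mul_inv]
      gcongr
    · have h2 : Tendsto (fun n : ℕ => (n : ℝ) - ‖q‖) atTop atTop :=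
        tendsto_atTop_add_const_right _ _ tendsto_natCast_atTop_atTop
      simpa using (h2.inv_tendsto_atTop).const_mul ‖p - q‖
  have h3 : Tendsto (fun n : ℕ => (p + n) / (q + n)) atTop (𝓝 1) := by
    have := (tendsto_const_nhds (x := (1:ℂ)) (f := atTop)).add hw
    rw [add_zero] at this
    refine this.congr fun n => ?_
    have := hq n
    field_simp
    ring
  have h4 := h3.norm
  rw [norm_one] at h4
  refine h4.congr fun n => ?_
  rw [norm_div]

lemma aux_summable1 (d : ℕ → ℂ) (p q : ℂ) (hq : ∀ k : ℕ, q + (k:ℂ) ≠ 0)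
    (hd : ∀ n : ℕ, d (n+1) = d n * ((p + n) / (q + n)))
    (ρ : ℝ) (h0 : 0 < ρ) (h1 : ρ < 1) :
    Summable (fun n => d n * (ρ:ℂ)^n) := by
  set r : ℝ := (ρ + 1) / 2 with hr
  have hρr : ρ < r := by rw [hr]; linarith
  have hr1 : r < 1 := by rw [hr]; linarith
  have hrρ : 1 < r / ρ := (one_lt_div h0).mpr hρr
  apply summable_of_ratio_norm_eventually_le hr1
  filter_upwards [(aux_tendsto_ratio p q hq).eventually_lt_const hrρ] with n hn
  have hnorm : ‖d (n+1) * (ρ:ℂ)^(n+1)‖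
      = (‖p + n‖ / ‖q + n‖) * ρ * ‖d n * (ρ:ℂ)^n‖ := by
    rw [hd n, pow_succ]
    simp only [norm_mul, norm_div, norm_pow, Complex.norm_real, Real.norm_eq_abs,
      abs_of_pos h0]
    ring
  rw [hnorm]
  have hle : ‖p + n‖ / ‖q + n‖ * ρ ≤ r := by
    have := (lt_div_iff₀ h0).mp hn
    linarith
  exact mul_le_mul_of_nonneg_right hle (norm_nonneg _)

lemma aux_field (a A B t : ℝ) (m : ℕ) (hB : B ≠ 0) (hm : (m:ℝ)+1 ≠ 0) :
    a * (((m:ℝ)+1) * t^m) * (((m:ℝ)+1+1)/((m:ℝ)+1) * (A/B) * t)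
      = a * (A/B) * (((m:ℝ)+2) * t^(m+1)) := by
  field_simp
  ring

lemma aux_summable2 (d : ℕ → ℂ) (p q : ℂ) (hq : ∀ k : ℕ, q + (k:ℂ) ≠ 0)
    (hd : ∀ n : ℕ, d (n+1) = d n * ((p + n) / (q + n)))
    (ρ : ℝ) (h0 : 0 < ρ) (h1 : ρ < 1) :
    Summable (fun n : ℕ => d n * ((n:ℂ) * (ρ:ℂ)^(n-1))) := by
  set r : ℝ := (ρ + 1) / 2 with hr
  have hρr : ρ < r := by rw [hr]; linarith
  have hr1 : r < 1 := by rw [hr]; linarith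
  apply summable_of_ratio_norm_eventually_le hr1
  have htend : Tendsto (fun n : ℕ => ((n:ℝ)+1)/(n:ℝ) * (‖p + n‖ / ‖q + n‖) * ρ)
      atTop (𝓝 ρ) := by
    have ha : Tendsto (fun n : ℕ => ((n:ℝ)+1)/(n:ℝ)) atTop (𝓝 1) := by
      have h' : Tendsto (fun n : ℕ => 1 + 1/(n:ℝ)) atTop (𝓝 (1 + 0)) :=
        tendsto_const_nhds.add tendsto_one_div_atTop_nhds_zero_nat
      rw [add_zero] at h'
      refine h'.congr' ?_
      filter_upwards [eventually_gt_atTop 0] with n hn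
      have : (n:ℝ) ≠ 0 := Nat.cast_ne_zero.mpr hn.ne'
      field_simp
    have := (ha.mul (aux_tendsto_ratio p q hq)).mul_const ρ
    simpa using this
  filter_upwards [htend.eventually_lt_const hρr, eventually_ge_atTop 1] with n hnr hn1
  obtain ⟨m, rfl⟩ : ∃ m, n = m + 1 := ⟨n - 1, by omega⟩
  have hB0 : ‖q + ((m+1:ℕ):ℂ)‖ ≠ 0 := norm_ne_zero_iff.mpr (hq (m+1))
  have hB0' : (0:ℝ) < ‖q + ((m+1:ℕ):ℂ)‖ := lt_of_le_of_ne (norm_nonneg _) (Ne.symm hB0)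
  have e2 : ‖d (m+1+1) * (((m+1+1:ℕ)):ℂ) * ((ρ:ℂ))^(m+1+1-1)‖
      = ‖d (m+1)‖ * (‖p + ((m+1:ℕ):ℂ)‖/‖q + ((m+1:ℕ):ℂ)‖) * (((m:ℝ)+2) * ρ^(m+1)) := by
    rw [hd (m+1)]
    simp only [Nat.add_sub_cancel, norm_mul, norm_div, norm_pow, Complex.norm_real,
      Real.norm_eq_abs, abs_of_pos h0, Complex.norm_natCast]
    push_cast
    ring
  have e1 : ‖d (m+1) * (((m+1:ℕ)):ℂ) * ((ρ:ℂ))^(m+1-1)‖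
      = ‖d (m+1)‖ * (((m:ℝ)+1) * ρ^m) := by
    simp only [Nat.add_sub_cancel, norm_mul, norm_pow, Complex.norm_real,
      Real.norm_eq_abs, abs_of_pos h0, Complex.norm_natCast]
    push_cast
    ring
  have goal2 : ‖d (m+1+1) * (((m+1+1:ℕ)):ℂ) * ((ρ:ℂ))^(m+1+1-1)‖
      ≤ r * ‖d (m+1) * (((m+1:ℕ)):ℂ) * ((ρ:ℂ))^(m+1-1)‖ := by
    rw [e1, e2]
    push_cast at hnr
    have hkey := mul_le_mul_of_nonneg_left hnr.le
      (show (0:ℝ) ≤ ‖d (m+1)‖ * (((m:ℝ)+1) * ρ^m) by positivity)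
    have heq : ‖d (m+1)‖ * (((m:ℝ)+1) * ρ^m)
          * (((m:ℝ)+1+1)/((m:ℝ)+1) * (‖p + ((m:ℂ)+1)‖/‖q + ((m:ℂ)+1)‖) * ρ)
        = ‖d (m+1)‖ * (‖p + ((m:ℂ)+1)‖/‖q + ((m:ℂ)+1)‖) * (((m:ℝ)+2) * ρ^(m+1)) := by
      have hm1 : ((m:ℝ)+1) ≠ 0 := by positivity
      have hB1 : ‖q + ((m:ℂ)+1)‖ ≠ 0 := by
        push_cast at hB0; exact hB0
      exact aux_field _ _ _ _ _ hB1 hm1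
    push_cast at hkey
    rw [heq] at hkey
    push_cast
    linarith [hkey]
  convert goal2 using 2 <;> push_cast
  · rfl
  all_goals ring

lemma h1c (c : ℂ) (hc : ∀ n : ℤ, c ≠ (n : ℂ)) : ∀ k : ℕ, (1 - c) + (k:ℂ) ≠ 0 := by
  intro k h
  apply hc (1 + k)
  push_cast
  linear_combination -h

lemma h2c (c : ℂ) (hc : ∀ n : ℤ, c ≠ (n : ℂ)) : ∀ k : ℕ, (2 - c) + (k:ℂ) ≠ 0 := by
  intro k h
  apply hc (2 + k)
  push_cast
  linear_combination -h

lemma hd_rec (b c : ℂ) (hc : ∀ n : ℤ, c ≠ (n : ℂ)) (n : ℕ) :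
    poch 1 (n+1) * poch (b - c) (n+1) / (poch (1 - c) (n+1) * ((n+1).factorial : ℂ))
    = poch 1 n * poch (b - c) n / (poch (1 - c) n * (n.factorial : ℂ))
      * (((b - c) + n) / ((1 - c) + n)) := by
  have hP : poch (1 - c) n ≠ 0 := poch_ne_zero _ (h1c c hc) n
  have hq : (1 - c) + (n:ℂ) ≠ 0 := h1c c hc n
  have hfac : ((n.factorial : ℂ)) ≠ 0 := by exact_mod_cast n.factorial_ne_zero
  have hn1 : ((n:ℂ) + 1) ≠ 0 := Nat.cast_add_one_ne_zero n
  rw [poch_succ, poch_succ, poch_succ, Nat.factorial_succ]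
  push_cast
  field_simp
  ring

lemma hterm (b c : ℂ) (hc : ∀ n : ℤ, c ≠ (n : ℂ)) (n : ℕ) :
    ((b - c) + n) * (poch 1 n * poch (b - c) n / (poch (1 - c) n * (n.factorial : ℂ)))
      - ((n:ℂ)+1) * (poch 1 (n+1) * poch (b - c) (n+1) / (poch (1 - c) (n+1) * ((n+1).factorial : ℂ)))
    = (-c*(b-c)/(1-c)) * (poch 1 n * poch (1 + b - c) n / (poch (2 - c) n * (n.factorial : ℂ))) := by
  have hP : poch (1 - c) n ≠ 0 := poch_ne_zero _ (h1c c hc) n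
  have hR : poch (2 - c) n ≠ 0 := poch_ne_zero _ (h2c c hc) n
  have hq : (1 - c) + (n:ℂ) ≠ 0 := h1c c hc n
  have h1 : (1 - c) ≠ 0 := by
    intro h; apply hc 1; push_cast; linear_combination -h
  have hfac : ((n.factorial : ℂ)) ≠ 0 := by exact_mod_cast n.factorial_ne_zero
  have hn1 : ((n:ℂ) + 1) ≠ 0 := Nat.cast_add_one_ne_zero n
  have eL2 : poch (b - c) n * ((b - c) + (n:ℂ)) = (b - c) * poch (1 + b - c) n := by
    rw [← poch_succ, poch_succ_left, show (b - c + 1 : ℂ) = 1 + b - c by ring]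
  have eL3 : poch (1 - c) n * ((1 - c) + (n:ℂ)) = (1 - c) * poch (2 - c) n := by
    rw [← poch_succ, poch_succ_left, show (1 - c + 1 : ℂ) = 2 - c by ring]
  calc ((b - c) + n) * (poch 1 n * poch (b - c) n / (poch (1 - c) n * (n.factorial : ℂ)))
      - ((n:ℂ)+1) * (poch 1 (n+1) * poch (b - c) (n+1) / (poch (1 - c) (n+1) * ((n+1).factorial : ℂ)))
      = (-c) * (poch 1 n * (poch (b - c) n * ((b - c) + (n:ℂ))))
          / ((poch (1 - c) n * ((1 - c) + (n:ℂ))) * (n.factorial : ℂ)) := by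
        rw [hd_rec b c hc n]
        field_simp
        ring
    _ = (-c) * (poch 1 n * ((b - c) * poch (1 + b - c) n))
          / (((1 - c) * poch (2 - c) n) * (n.factorial : ℂ)) := by rw [eL2, eL3]
    _ = (-c*(b-c)/(1-c)) * (poch 1 n * poch (1 + b - c) n / (poch (2 - c) n * (n.factorial : ℂ))) := by
        field_simp

/-- with `B(c) = (1−c)(x(x−1)∂ + bx − c + 1)`, we have
`B(c+1) • f₂(c+1) = c²·(b−c)/(1−c)·f₂(c)` on `0 < x < 1`, for `c` not an
integer. -/
theorem downstep_on_f2 (b c : ℂ) (hc : ∀ n : ℤ, c ≠ (n : ℂ)) :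
    ∀ x ∈ Set.Ioo (0 : ℝ) 1,
      (1 - (c + 1)) * ((x : ℂ) * ((x : ℂ) - 1) * deriv (f2 b (c + 1)) x
          + (b * (x : ℂ) - (c + 1) + 1) * f2 b (c + 1) x)
        = c ^ 2 * (b - c) / (1 - c) * f2 b c x := by
  intro x hx
  obtain ⟨hx0, hx1⟩ := hx
  set d : ℕ → ℂ := fun n => poch 1 n * poch (b - c) n / (poch (1 - c) n * (n.factorial : ℂ))
    with hd_def
  have hd : ∀ n : ℕ, d (n+1) = d n * (((b - c) + n) / ((1 - c) + n)) := fun n =>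
    hd_rec b c hc n
  have hq := h1c c hc
  -- summability at x
  have S1 : Summable (fun n => d n * ((x:ℝ):ℂ)^n) :=
    aux_summable1 d (b-c) (1-c) hq hd x hx0 hx1
  have S2 : Summable (fun n : ℕ => d n * ((n:ℂ) * ((x:ℝ):ℂ)^(n-1))) :=
    aux_summable2 d (b-c) (1-c) hq hd x hx0 hx1
  set r : ℝ := (x + 1) / 2 with hr
  have hr0 : 0 < r := by rw [hr]; linarith
  have hr1 : r < 1 := by rw [hr]; linarith
  have hxr : x < r := by rw [hr]; linarith
  have S2r : Summable (fun n : ℕ => d n * ((n:ℂ) * ((r:ℝ):ℂ)^(n-1))) :=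
    aux_summable2 d (b-c) (1-c) hq hd r hr0 hr1
  -- termwise differentiation
  have hT : HasDerivAt (fun y : ℝ => ∑' n : ℕ, d n * ((y:ℝ):ℂ)^n)
      (∑' n : ℕ, d n * ((n:ℂ) * ((x:ℝ):ℂ)^(n-1))) x := by
    refine hasDerivAt_tsum_of_isPreconnected
      (g := fun n (y : ℝ) => d n * ((y:ℝ):ℂ)^n)
      (g' := fun n (y : ℝ) => d n * ((n:ℂ) * ((y:ℝ):ℂ)^(n-1)))
      (u := fun n => ‖d n * ((n:ℂ) * ((r:ℝ):ℂ)^(n-1))‖)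
      (summable_norm_iff.mpr S2r) (isOpen_Ioo (a := -r) (b := r)) isPreconnected_Ioo
      (fun n y _ => ?_) (fun n y hy => ?_) (Set.mem_Ioo.mpr ⟨by linarith, hxr⟩) S1
      (Set.mem_Ioo.mpr ⟨by linarith, hxr⟩)
    · exact ((hasDerivAt_pow n ((y:ℝ):ℂ)).comp_ofReal).const_mul (d n)
    · obtain ⟨hy1, hy2⟩ := hy
      simp only [norm_mul, Complex.norm_natCast, norm_pow, Complex.norm_real,
        Real.norm_eq_abs, abs_of_pos hr0]
      gcongr
      exact (abs_lt.mpr ⟨hy1, hy2⟩).le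
  -- rewriting f2 b (c+1)
  have hf2eq : f2 b (c+1) = fun y : ℝ => ((y:ℝ):ℂ)^(-c:ℂ) * ∑' n : ℕ, d n * ((y:ℝ):ℂ)^n := by
    funext y
    simp only [f2, hd_def]
    rw [show (1 - (c+1) : ℂ) = -c by ring]
    congr 1
    apply tsum_congr
    intro n
    rw [show (1 + b - (c+1) : ℂ) = b - c by ring, show (2 - (c+1) : ℂ) = 1 - c by ring]
  have hu0 : ((x:ℝ):ℂ) ≠ 0 := by
    simp only [ne_eq, Complex.ofReal_eq_zero]
    exact hx0.ne'
  have hpow : HasDerivAt (fun y : ℝ => ((y:ℝ):ℂ)^(-c:ℂ)) ((-c) * ((x:ℝ):ℂ)^(-c-1:ℂ)) x := by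
    have h0 : ((x:ℝ):ℂ) ∈ Complex.slitPlane := Complex.ofReal_mem_slitPlane.mpr hx0
    exact (Complex.hasStrictDerivAt_cpow_const h0).hasDerivAt.comp_ofReal
  have hder : HasDerivAt (f2 b (c+1))
      ((-c) * ((x:ℝ):ℂ)^(-c-1:ℂ) * (∑' n : ℕ, d n * ((x:ℝ):ℂ)^n)
        + ((x:ℝ):ℂ)^(-c:ℂ) * (∑' n : ℕ, d n * ((n:ℂ) * ((x:ℝ):ℂ)^(n-1)))) x := by
    rw [hf2eq]
    exact hpow.mul hT
  set T := ∑' n : ℕ, d n * ((x:ℝ):ℂ)^n with hT_def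
  set T' := ∑' n : ℕ, d n * ((n:ℂ) * ((x:ℝ):ℂ)^(n-1)) with hT'_def
  set S := ∑' n : ℕ, poch 1 n * poch (1 + b - c) n / (poch (2 - c) n * (n.factorial:ℂ))
      * ((x:ℝ):ℂ)^n with hS_def
  -- key series identity
  have S3 : Summable (fun n : ℕ => ((b-c) + n) * d n * ((x:ℝ):ℂ)^n) := by
    refine ((S1.mul_left (b-c)).add (S2.mul_left ((x:ℝ):ℂ))).congr fun n => ?_
    rcases n with _ | m
    · simp
    · simp only [pow_succ, Nat.cast_succ, Nat.add_sub_cancel]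
      ring
  have S4 : Summable (fun n : ℕ => ((n:ℂ)+1) * d (n+1) * ((x:ℝ):ℂ)^n) := by
    refine ((summable_nat_add_iff 1).mpr S2).congr fun n => ?_
    simp only [Nat.add_sub_cancel]
    push_cast
    ring
  have key : (b-c) * T + (((x:ℝ):ℂ) - 1) * T' = (-c*(b-c)/(1-c)) * S := by
    rw [hT_def, hT'_def, ← tsum_mul_left, ← tsum_mul_left,
      ← (S1.mul_left (b-c)).tsum_add (S2.mul_left (((x:ℝ):ℂ) - 1))]
    have step1 : ∑' n : ℕ, ((b-c) * (d n * ((x:ℝ):ℂ)^n)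
          + (((x:ℝ):ℂ) - 1) * (d n * ((n:ℂ) * ((x:ℝ):ℂ)^(n-1))))
        = ∑' n : ℕ, (((b-c) + n) * d n * ((x:ℝ):ℂ)^n - d n * ((n:ℂ) * ((x:ℝ):ℂ)^(n-1))) := by
      apply tsum_congr
      intro n
      rcases n with _ | m
      · simp
      · simp only [pow_succ, Nat.cast_succ, Nat.add_sub_cancel]
        ring
    rw [step1, S3.tsum_sub S2]
    have step2 : ∑' n : ℕ, d n * ((n:ℂ) * ((x:ℝ):ℂ)^(n-1))
        = ∑' n : ℕ, ((n:ℂ)+1) * d (n+1) * ((x:ℝ):ℂ)^n := by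
      rw [S2.tsum_eq_zero_add]
      simp only [Nat.cast_zero, zero_mul, mul_zero, zero_add, Nat.add_sub_cancel]
      apply tsum_congr
      intro n
      push_cast
      ring
    rw [step2, ← S3.tsum_sub S4, hS_def, ← tsum_mul_left]
    apply tsum_congr
    intro n
    have h := hterm b c hc n
    rw [hd_def]
    simp only []
    linear_combination ((x:ℝ):ℂ)^n * h
  -- final assembly
  have hval1 : f2 b (c+1) x = ((x:ℝ):ℂ)^(-c:ℂ) * T := by rw [hf2eq]
  have hval2 : f2 b c x = ((x:ℝ):ℂ)^((1:ℂ)-c) * S := by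
    simp only [f2, hS_def]
  have ea : ((x:ℝ):ℂ)^(-c-1:ℂ) * ((x:ℝ):ℂ) = ((x:ℝ):ℂ)^(-c:ℂ) := by
    have h1 := Complex.cpow_add (x := ((x:ℝ):ℂ)) (-c-1) 1 hu0
    rw [Complex.cpow_one] at h1
    rw [← h1]
    congr 1
    ring
  have eb : ((x:ℝ):ℂ)^(-c-1:ℂ) * ((x:ℝ):ℂ) * ((x:ℝ):ℂ) = ((x:ℝ):ℂ)^((1:ℂ)-c) := by
    have h1 := Complex.cpow_add (x := ((x:ℝ):ℂ)) (-c) 1 hu0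
    rw [Complex.cpow_one] at h1
    rw [ea, ← h1]
    congr 1
    ring
  rw [hder.deriv, hval1, hval2, ← ea, ← eb]
  linear_combination ((-c) * (((x:ℝ):ℂ)^(-c-1:ℂ)) * ((x:ℝ):ℂ) * ((x:ℝ):ℂ)) * key
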